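/- The element 1⊗1⊗1 ∈ A⊗A⊗A is a canonical R-matrix if and only if the unit map k → A is an epimorphism in the category of rings (equivalently, a⊗1 = 1⊗a in A⊗_k A for all a ∈ A). -/

import Mathlib

open TensorProduct

/-- The element `1 ⊗ 1 ⊗ 1 ∈ A ⊗ A ⊗ A` is a canonical R-matrix
(invertible, satisfying the three centralizing conditions and the two hexagon identities)
if and only if the unit map `k → A` is an epimorphism in the category of rings,
equivalently `a ⊗ 1 = 1 ⊗ a` in `A ⊗ₖ A` for all `a ∈ A`. -/
theorem trivial_canonical_R_matrix_iff_epimorphism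
    (k A : Type*) [CommRing k] [Ring A] [Algebra k A] :
    (IsUnit ((1 : A) ⊗ₜ[k] (1 : A) ⊗ₜ[k] (1 : A)) ∧
     (∀ a : A, (1 : A) ⊗ₜ[k] (1 : A) ⊗ₜ[k] (a * 1)
        = ((1 : A) * a) ⊗ₜ[k] (1 : A) ⊗ₜ[k] (1 : A)) ∧
     (∀ a : A, (a * 1) ⊗ₜ[k] (1 : A) ⊗ₜ[k] (1 : A)
        = (1 : A) ⊗ₜ[k] ((1 : A) * a) ⊗ₜ[k] (1 : A)) ∧
     (∀ a : A, (1 : A) ⊗ₜ[k] (a * 1) ⊗ₜ[k] (1 : A)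
        = (1 : A) ⊗ₜ[k] (1 : A) ⊗ₜ[k] ((1 : A) * a)) ∧
     ((1 : A) ⊗ₜ[k] (1 : A) ⊗ₜ[k] (1 : A) ⊗ₜ[k] (1 : A)
        = ((1 : A) * 1) ⊗ₜ[k] (1 : A) ⊗ₜ[k] ((1 : A) * 1) ⊗ₜ[k] (1 : A)) ∧
     ((1 : A) ⊗ₜ[k] (1 : A) ⊗ₜ[k] (1 : A) ⊗ₜ[k] (1 : A)
        = (1 : A) ⊗ₜ[k] ((1 : A) * 1) ⊗ₜ[k] (1 : A) ⊗ₜ[k] ((1 : A) * 1)))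
    ↔ (∀ a : A, a ⊗ₜ[k] (1 : A) = (1 : A) ⊗ₜ[k] a) := by
  constructor
  · rintro ⟨-, -, h3, -⟩
    intro a
    have := congrArg ((LinearMap.lTensor A (LinearMap.mul' k A)) ∘ₗ (TensorProduct.assoc k A A A).toLinearMap) (h3 a)
    simpa using this
  · intro h
    have key : ∀ a : A, a ⊗ₜ[k] (1:A) ⊗ₜ[k] (1:A) = (1:A) ⊗ₜ[k] a ⊗ₜ[k] (1:A) := by
      intro a
      have := congrArg
        ((TensorProduct.mk k (A ⊗[k] A) A).flip 1) (h a)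
      simpa using this
    have key2 : ∀ a : A, (1:A) ⊗ₜ[k] a ⊗ₜ[k] (1:A) = (1:A) ⊗ₜ[k] (1:A) ⊗ₜ[k] a := by
      intro a; have := congrArg (TensorProduct.assoc k A A A).symm (congrArg (fun x => (1:A) ⊗ₜ[k] x) (h a)); simpa using this
    refine ⟨?_, ?_, ?_, ?_, by simp, by simp⟩
    · have h1 : ((1:A) ⊗ₜ[k] (1:A) ⊗ₜ[k] (1:A)) = (1 : A ⊗[k] A ⊗[k] A) := by
        simp [Algebra.TensorProduct.one_def]
      rw [h1]; exact isUnit_one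
    · intro a; simpa using ((key a).trans (key2 a)).symm
    · intro a; simpa using key a
    · intro a; simpa using key2 a
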